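/- Let α : [0,∞) → (0,1) be continuous, let λ > 0, τ ≥ 0, and let n ≥ 1 be an integer. Then lim_{h→0⁺} (1/h) ∑_{r=1}^∞ ((−1)^{n+r}/r!) ∫_{[τ,τ+h]^r} λ^{β_r(s₁,…,s_r)} binom(β_r(s₁,…,s_r), n) ds₁⋯ds_r = (−1)^{n+1} λ^{α(τ)} binom(α(τ), n). -/

import Mathlib

open MeasureTheory

/-- Generalized binomial coefficient `binom(x, n) = (∏_{j=0}^{n-1} (x - j)) / n!`. -/
noncomputable def gbinom (x : ℝ) (n : ℕ) : ℝ :=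
  (∏ j ∈ Finset.range n, (x - (j : ℝ))) / (n.factorial : ℝ)

/-- `β_r(s₁, …, s_r) = ∑_{j=1}^r α(s_j)`. -/
noncomputable def betaSum (α : ℝ → ℝ) {r : ℕ} (s : Fin r → ℝ) : ℝ :=
  ∑ j, α (s j)

lemma gbinom_abs_le (n m : ℕ) {x : ℝ} (hx : x ∈ Set.Icc (0:ℝ) m) :
    |gbinom x n| ≤ ((m:ℝ) + n) ^ n := by
  have h1 : |gbinom x n| ≤ |∏ j ∈ Finset.range n, (x - (j : ℝ))| := by
    rw [gbinom, abs_div]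
    have : (1:ℝ) ≤ |(n.factorial : ℝ)| := by
      rw [abs_of_pos (by positivity)]
      exact_mod_cast Nat.one_le_iff_ne_zero.mpr n.factorial_ne_zero
    calc |∏ j ∈ Finset.range n, (x - (j : ℝ))| / |(n.factorial : ℝ)|
        ≤ |∏ j ∈ Finset.range n, (x - (j : ℝ))| / 1 :=
          div_le_div_of_nonneg_left (abs_nonneg _) one_pos this
      _ = _ := by ring
  refine h1.trans ?_
  rw [Finset.abs_prod]
  calc ∏ j ∈ Finset.range n, |x - (j : ℝ)|
      ≤ ∏ _j ∈ Finset.range n, ((m:ℝ) + n) := by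
        refine Finset.prod_le_prod (fun j _ => abs_nonneg _) (fun j hj => ?_)
        rw [Finset.mem_range] at hj
        rw [abs_le]
        constructor
        · have : (j:ℝ) ≤ (m:ℝ) + n := by
            have : (j:ℝ) ≤ n := by exact_mod_cast hj.le
            linarith [Nat.cast_nonneg (α := ℝ) m]
          linarith [hx.1]
        · have : x ≤ (m:ℝ) + n := by
            have := hx.2
            linarith [Nat.cast_nonneg (α := ℝ) n]
          linarith [Nat.cast_nonneg (α := ℝ) j]
    _ = ((m:ℝ) + n) ^ n := by rw [Finset.prod_const, Finset.card_range]

lemma F_abs_le {lam : ℝ} (hlam : 0 < lam) (n m : ℕ) {x : ℝ} (hx : x ∈ Set.Icc (0:ℝ) m) :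
    |lam ^ x * gbinom x n| ≤ (max 1 lam) ^ m * ((m:ℝ) + n) ^ n := by
  rw [abs_mul]
  have h1 : |lam ^ x| ≤ (max 1 lam) ^ m := by
    rw [abs_of_pos (Real.rpow_pos_of_pos hlam x)]
    calc lam ^ x ≤ (max 1 lam) ^ x :=
          Real.rpow_le_rpow hlam.le (le_max_right 1 lam) hx.1
      _ ≤ (max 1 lam) ^ (m:ℝ) :=
          Real.rpow_le_rpow_of_exponent_le (le_max_left 1 lam) hx.2
      _ = (max 1 lam) ^ m := Real.rpow_natCast _ m
  exact mul_le_mul h1 (gbinom_abs_le n m hx) (abs_nonneg _) (by positivity)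

lemma betaSum_mem {α : ℝ → ℝ} (hα : ∀ s ∈ Set.Ici (0 : ℝ), α s ∈ Set.Ioo (0 : ℝ) 1)
    {τ h : ℝ} (hτ : 0 ≤ τ) (m : ℕ) {s : Fin m → ℝ}
    (hs : s ∈ Set.univ.pi fun _ => Set.Icc τ (τ + h)) :
    betaSum α s ∈ Set.Icc (0:ℝ) m := by
  have key : ∀ j : Fin m, α (s j) ∈ Set.Ioo (0:ℝ) 1 := by
    intro j
    exact hα _ (le_trans hτ (hs j (Set.mem_univ j)).1)
  constructor
  · exact Finset.sum_nonneg fun j _ => (key j).1.le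
  · calc betaSum α s ≤ ∑ _j : Fin m, (1:ℝ) :=
          Finset.sum_le_sum fun j _ => (key j).2.le
      _ = m := by simp

lemma volume_piIcc (τ h : ℝ) (m : ℕ) :
    volume (Set.univ.pi fun _ : Fin m => Set.Icc τ (τ + h)) = ENNReal.ofReal h ^ m := by
  rw [volume_pi_pi]
  simp [Real.volume_Icc]

lemma integral_bound {α : ℝ → ℝ} (hα : ∀ s ∈ Set.Ici (0 : ℝ), α s ∈ Set.Ioo (0 : ℝ) 1)
    {lam : ℝ} (hlam : 0 < lam) {τ h : ℝ} (hτ : 0 ≤ τ) (hh : 0 < h) (n m : ℕ) :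
    ‖∫ s : Fin m → ℝ in Set.univ.pi (fun _ => Set.Icc τ (τ + h)),
        lam ^ betaSum α s * gbinom (betaSum α s) n‖ ≤
      (max 1 lam) ^ m * ((m:ℝ) + n) ^ n * h ^ m := by
  have hmeas : MeasurableSet (Set.univ.pi fun _ : Fin m => Set.Icc τ (τ + h)) :=
    MeasurableSet.univ_pi fun _ => measurableSet_Icc
  have hvol : volume (Set.univ.pi fun _ : Fin m => Set.Icc τ (τ + h)) = ENNReal.ofReal h ^ m :=
    volume_piIcc τ h m
  have hfin : volume (Set.univ.pi fun _ : Fin m => Set.Icc τ (τ + h)) < ⊤ := by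
    rw [hvol]; exact ENNReal.pow_lt_top ENNReal.ofReal_lt_top
  have := norm_setIntegral_le_of_norm_le_const (μ := volume) hfin
    (f := fun s : Fin m → ℝ => lam ^ betaSum α s * gbinom (betaSum α s) n)
    (C := (max 1 lam) ^ m * ((m:ℝ) + n) ^ n)
    (fun s hs => by
      rw [Real.norm_eq_abs]
      exact F_abs_le hlam n m (betaSum_mem hα hτ m hs))
  refine this.trans (le_of_eq ?_)
  rw [measureReal_def, hvol]
  rw [ENNReal.toReal_pow, ENNReal.toReal_ofReal hh.le]

lemma integral_fin_one (G : ℝ → ℝ) (a b : ℝ) :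
    (∫ s : Fin 1 → ℝ in Set.univ.pi fun _ => Set.Icc a b, G (s 0)) =
      ∫ y in Set.Icc a b, G y := by
  have hmp := volume_preserving_funUnique (Fin 1) ℝ
  have hemb : MeasurableEmbedding (MeasurableEquiv.funUnique (Fin 1) ℝ) :=
    (MeasurableEquiv.funUnique (Fin 1) ℝ).measurableEmbedding
  have hset : (Set.univ.pi fun _ : Fin 1 => Set.Icc a b) =
      (MeasurableEquiv.funUnique (Fin 1) ℝ) ⁻¹' (Set.Icc a b) := by
    ext s
    constructor
    · intro hs
      exact hs default trivial
    · intro hs i _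
      have hs' : s default ∈ Set.Icc a b := hs
      rwa [Subsingleton.elim i default]
  rw [hset, ← hmp.setIntegral_preimage_emb hemb G (Set.Icc a b)]
  rfl

lemma tendsto_avg (g : ℝ → ℝ) (τ : ℝ) (hτ : 0 ≤ τ) (hg : ContinuousOn g (Set.Ici 0)) :
    Filter.Tendsto (fun h => (1/h) * ∫ y in Set.Icc τ (τ+h), g y)
      (nhdsWithin 0 (Set.Ioi 0)) (nhds (g τ)) := by
  rw [Metric.tendsto_nhdsWithin_nhds]
  intro ε hε
  have hcw : ContinuousWithinAt g (Set.Ici 0) τ := hg τ (Set.mem_Ici.mpr hτ)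
  rw [Metric.continuousWithinAt_iff] at hcw
  obtain ⟨δ, hδ, hδ'⟩ := hcw (ε/2) (by linarith)
  refine ⟨δ, hδ, ?_⟩
  intro h hh hhd
  rw [Set.mem_Ioi] at hh
  rw [Real.dist_eq, sub_zero, abs_of_pos hh] at hhd
  have hfin : volume (Set.Icc τ (τ+h)) < ⊤ := by
    rw [Real.volume_Icc]; exact ENNReal.ofReal_lt_top
  have hint : IntegrableOn g (Set.Icc τ (τ+h)) volume :=
    ContinuousOn.integrableOn_Icc (hg.mono (fun y hy => le_trans hτ hy.1))
  have hvol : (volume (Set.Icc τ (τ+h))).toReal = h := by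
    rw [Real.volume_Icc]
    simp [ENNReal.toReal_ofReal hh.le]
  have hconst : (∫ _y in Set.Icc τ (τ+h), g τ) = h * g τ := by
    rw [setIntegral_const, measureReal_def, hvol, smul_eq_mul]
  have hCbound : ∀ y ∈ Set.Icc τ (τ+h), ‖g y - g τ‖ ≤ ε/2 := by
    intro y hy
    rw [Real.norm_eq_abs, ← Real.dist_eq]
    refine le_of_lt (hδ' (Set.mem_Ici.mpr (le_trans hτ hy.1)) ?_)
    rw [Real.dist_eq, abs_of_nonneg (by linarith [hy.1])]
    linarith [hy.2]
  have hb := norm_setIntegral_le_of_norm_le_const (μ := volume) (s := Set.Icc τ (τ+h))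
    (f := fun y => g y - g τ) (C := ε/2) hfin hCbound
  rw [measureReal_def, hvol] at hb
  have hsub : (∫ y in Set.Icc τ (τ+h), (g y - g τ)) =
      (∫ y in Set.Icc τ (τ+h), g y) - h * g τ := by
    rw [integral_sub hint ((integrableOn_const_iff).mpr (Or.inr hfin)), hconst]
  rw [Real.dist_eq]
  have heq : 1/h * (∫ y in Set.Icc τ (τ+h), g y) - g τ
      = 1/h * (∫ y in Set.Icc τ (τ+h), (g y - g τ)) := by
    rw [hsub]
    field_simp
  rw [heq, abs_mul, abs_of_pos (by positivity : (0:ℝ) < 1/h)]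
  calc 1/h * |∫ y in Set.Icc τ (τ+h), (g y - g τ)|
      ≤ 1/h * ((ε/2) * h) := by
        apply mul_le_mul_of_nonneg_left _ (by positivity)
        rw [← Real.norm_eq_abs]
        exact hb
    _ = ε/2 := by field_simp
    _ < ε := by linarith

theorem stmt_7 (α : ℝ → ℝ) (hα : ∀ s ∈ Set.Ici (0 : ℝ), α s ∈ Set.Ioo (0 : ℝ) 1)
    (hαc : ContinuousOn α (Set.Ici 0)) (lam : ℝ) (hlam : 0 < lam)
    (τ : ℝ) (hτ : 0 ≤ τ) (n : ℕ) (hn : 1 ≤ n) :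
    Filter.Tendsto
      (fun h : ℝ => (1 / h) *
        ∑' r : ℕ, ((-1 : ℝ) ^ (n + (r + 1)) / ((r + 1).factorial : ℝ)) *
          ∫ s : Fin (r + 1) → ℝ in Set.univ.pi (fun _ => Set.Icc τ (τ + h)),
            lam ^ betaSum α s * gbinom (betaSum α s) n)
      (nhdsWithin 0 (Set.Ioi 0))
      (nhds ((-1 : ℝ) ^ (n + 1) * lam ^ α τ * gbinom (α τ) n)) := by
  classical
  set C : ℝ := max 1 lam with hCdef
  have hC1 : (1:ℝ) ≤ C := le_max_left 1 lam
  have hC0 : (0:ℝ) < C := lt_of_lt_of_le one_pos hC1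
  set D : ℝ := ((n:ℝ)+1)^n with hDdef
  have hD0 : (0:ℝ) < D := by positivity
  set h₀ : ℝ := min 1 (1/(2*C)) with hh₀def
  have hh₀pos : 0 < h₀ := lt_min one_pos (by positivity)
  set f : ℝ → ℕ → ℝ := fun h r => ((-1 : ℝ) ^ (n + (r + 1)) / ((r + 1).factorial : ℝ)) *
      ∫ s : Fin (r + 1) → ℝ in Set.univ.pi (fun _ => Set.Icc τ (τ + h)),
        lam ^ betaSum α s * gbinom (betaSum α s) n with hfdef
  show Filter.Tendsto (fun h : ℝ => (1 / h) * ∑' r : ℕ, f h r)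
      (nhdsWithin 0 (Set.Ioi 0))
      (nhds ((-1 : ℝ) ^ (n + 1) * lam ^ α τ * gbinom (α τ) n))
  -- key pointwise bound
  have keybound : ∀ {h : ℝ}, 0 < h → ∀ r : ℕ,
      |f h r| ≤ (h*C)^(r+1) * (D * ((r+1:ℕ):ℝ)^n) := by
    intro h hh r
    have h1 : |f h r| ≤ (1 / ((r+1).factorial : ℝ)) *
        (C ^ (r+1) * (((r+1:ℕ):ℝ) + n) ^ n * h ^ (r+1)) := by
      rw [hfdef]
      simp only []
      rw [abs_mul, abs_div, abs_pow, abs_neg, abs_one, one_pow,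
        abs_of_pos (by positivity : (0:ℝ) < ((r+1).factorial : ℝ))]
      refine mul_le_mul le_rfl ?_ (abs_nonneg _) (by positivity)
      rw [← Real.norm_eq_abs]
      exact integral_bound hα hlam hτ hh n (r+1)
    refine h1.trans ?_
    have hfac : (1 : ℝ) / ((r+1).factorial : ℝ) ≤ 1 := by
      rw [div_le_one (by positivity)]
      exact_mod_cast Nat.one_le_iff_ne_zero.mpr (r+1).factorial_ne_zero
    have hm1 : (1:ℝ) ≤ ((r+1:ℕ):ℝ) := by exact_mod_cast Nat.succ_le_succ (Nat.zero_le r)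
    have hmid : (((r+1:ℕ):ℝ) + n) ^ n ≤ D * ((r+1:ℕ):ℝ)^n := by
      have hle : ((r+1:ℕ):ℝ) + n ≤ ((n:ℝ)+1) * ((r+1:ℕ):ℝ) := by
        nlinarith [Nat.cast_nonneg (α := ℝ) n]
      calc (((r+1:ℕ):ℝ) + n) ^ n ≤ (((n:ℝ)+1) * ((r+1:ℕ):ℝ)) ^ n :=
            pow_le_pow_left₀ (by positivity) hle n
        _ = D * ((r+1:ℕ):ℝ)^n := by rw [mul_pow]
    calc (1 / ((r+1).factorial : ℝ)) * (C ^ (r+1) * (((r+1:ℕ):ℝ) + n) ^ n * h ^ (r+1))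
        ≤ 1 * (C ^ (r+1) * (D * ((r+1:ℕ):ℝ)^n) * h ^ (r+1)) := by
          apply mul_le_mul hfac _ (by positivity) one_pos.le
          apply mul_le_mul_of_nonneg_right _ (by positivity)
          exact mul_le_mul_of_nonneg_left hmid (by positivity)
      _ = (h*C)^(r+1) * (D * ((r+1:ℕ):ℝ)^n) := by rw [mul_pow]; ring
  -- half bound
  have hhalf : ∀ {h : ℝ}, h ∈ Set.Ioc (0:ℝ) h₀ → h * C ≤ 1/2 := by
    intro h hh
    have h2 : h ≤ 1/(2*C) := le_trans hh.2 (min_le_right _ _)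
    calc h * C ≤ (1/(2*C)) * C := mul_le_mul_of_nonneg_right h2 hC0.le
      _ = 1/2 := by field_simp
  have hgeo : Summable (fun m : ℕ => ((m:ℝ))^n * (1/2:ℝ)^m) :=
    summable_pow_mul_geometric_of_norm_lt_one n (by rw [Real.norm_eq_abs, abs_of_pos (by norm_num : (0:ℝ) < 1/2)]; norm_num)
  -- summability of f h
  have hsum : ∀ {h : ℝ}, h ∈ Set.Ioc (0:ℝ) h₀ → Summable (f h) := by
    intro h hh
    refine Summable.of_norm_bounded
      (g := fun r => D * ((r+1:ℕ):ℝ)^n * (1/2:ℝ)^(r+1)) ?_ ?_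
    · have := ((summable_nat_add_iff 1).mpr hgeo).mul_left D
      exact this.congr (fun r => by push_cast; ring)
    · intro r
      rw [Real.norm_eq_abs]
      refine (keybound hh.1 r).trans ?_
      have hle : (h*C)^(r+1) ≤ (1/2:ℝ)^(r+1) :=
        pow_le_pow_left₀ (mul_nonneg hh.1.le hC0.le) (hhalf hh) _
      calc (h*C)^(r+1) * (D * ((r+1:ℕ):ℝ)^n)
          ≤ (1/2:ℝ)^(r+1) * (D * ((r+1:ℕ):ℝ)^n) :=
            mul_le_mul_of_nonneg_right hle (by positivity)
        _ = D * ((r+1:ℕ):ℝ)^n * (1/2:ℝ)^(r+1) := by ring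
  -- tail bound
  set e : ℕ → ℝ := fun r => (((r+2:ℕ)):ℝ)^n * (1/2:ℝ)^(r+2) with hedef
  have hesum : Summable e := by
    have := (summable_nat_add_iff 2).mpr hgeo
    exact this.congr (fun r => by rw [hedef])
  have he0 : ∀ r, 0 ≤ e r := fun r => by rw [hedef]; positivity
  have tailbound : ∀ {h : ℝ}, h ∈ Set.Ioc (0:ℝ) h₀ → ∀ r : ℕ,
      ‖f h (r+1)‖ ≤ h^2 * (4*C^2*D) * e r := by
    intro h hh r
    rw [Real.norm_eq_abs]
    refine (keybound hh.1 (r+1)).trans ?_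
    have h2 : (h*C)^r ≤ (1/2:ℝ)^r := pow_le_pow_left₀ (mul_nonneg hh.1.le hC0.le) (hhalf hh) r
    have hcast : (((r+1+1:ℕ)):ℝ) = (((r+2:ℕ)):ℝ) := by push_cast; ring
    rw [hcast, hedef]
    have h3 : ((1:ℝ)/2)^r = 4 * (1/2:ℝ)^(r+2) := by ring
    calc (h*C)^(r+1+1) * (D * (((r+2:ℕ)):ℝ)^n)
        = h^2*C^2*(h*C)^r * (D * (((r+2:ℕ)):ℝ)^n) := by ring
      _ ≤ h^2*C^2*(1/2:ℝ)^r * (D * (((r+2:ℕ)):ℝ)^n) := by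
          apply mul_le_mul_of_nonneg_right _ (by positivity)
          exact mul_le_mul_of_nonneg_left h2 (by positivity)
      _ = h^2 * (4*C^2*D) * ((((r+2:ℕ)):ℝ)^n * (1/2:ℝ)^(r+2)) := by rw [h3]; ring
  set K : ℝ := ∑' r, e r with hKdef
  have hK0 : 0 ≤ K := tsum_nonneg he0
  -- tail sum bound
  have hS : ∀ {h : ℝ}, h ∈ Set.Ioc (0:ℝ) h₀ →
      ‖∑' r, f h (r+1)‖ ≤ h^2 * (4*C^2*D) * K := by
    intro h hh
    have hsumtail : Summable (fun r => f h (r+1)) := (summable_nat_add_iff 1).mpr (hsum hh)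
    have hbig : Summable (fun r => h^2 * (4*C^2*D) * e r) := hesum.mul_left _
    have hnorm : Summable (fun r => ‖f h (r+1)‖) := hsumtail.abs.congr (fun r => rfl)
    calc ‖∑' r, f h (r+1)‖ ≤ ∑' r, ‖f h (r+1)‖ := norm_tsum_le_tsum_norm hnorm
      _ ≤ ∑' r, h^2 * (4*C^2*D) * e r := Summable.tsum_le_tsum (fun r => tailbound hh r) hnorm hbig
      _ = h^2 * (4*C^2*D) * K := by rw [tsum_mul_left]
  -- continuity of G
  set G : ℝ → ℝ := fun y => lam ^ α y * gbinom (α y) n with hGdef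
  have hrpow : Continuous fun x : ℝ => lam ^ x :=
    continuous_iff_continuousAt.mpr fun x => Real.continuousAt_const_rpow hlam.ne'
  have hgb : Continuous fun x : ℝ => gbinom x n := by
    show Continuous fun x : ℝ => (∏ j ∈ Finset.range n, (x - (j:ℝ))) / (n.factorial : ℝ)
    exact (continuous_finset_prod _ fun j _ => continuous_id.sub continuous_const).div_const _
  have hGc : ContinuousOn G (Set.Ici 0) :=
    ((hrpow.comp_continuousOn hαc).mul (hgb.comp_continuousOn hαc))
  -- r = 0 term
  have hf0 : ∀ h : ℝ, f h 0 = (-1:ℝ)^(n+1) * ∫ y in Set.Icc τ (τ+h), G y := by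
    intro h
    show ((-1 : ℝ) ^ (n + 1) / ((1 : ℕ).factorial : ℝ)) *
        (∫ s : Fin 1 → ℝ in Set.univ.pi (fun _ => Set.Icc τ (τ + h)),
          lam ^ betaSum α s * gbinom (betaSum α s) n) = _
    have hb : ∀ s : Fin 1 → ℝ, betaSum α s = α (s 0) := fun s => by
      rw [betaSum, Fin.sum_univ_one]
    have h1 : (∫ s : Fin 1 → ℝ in Set.univ.pi (fun _ => Set.Icc τ (τ + h)),
          lam ^ betaSum α s * gbinom (betaSum α s) n)
        = ∫ y in Set.Icc τ (τ+h), G y := by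
      rw [← integral_fin_one G τ (τ+h)]
      apply integral_congr_ae
      filter_upwards with s
      rw [hb s, hGdef]
    rw [h1]
    norm_num [Nat.factorial_one]
  -- eventual split
  have hmem : Set.Ioc (0:ℝ) h₀ ∈ nhdsWithin (0:ℝ) (Set.Ioi 0) :=
    Ioc_mem_nhdsGT_of_mem ⟨le_refl 0, hh₀pos⟩
  have hsplit : ∀ᶠ h in nhdsWithin (0:ℝ) (Set.Ioi 0),
      ((-1:ℝ)^(n+1) * ((1/h) * ∫ y in Set.Icc τ (τ+h), G y) + (1/h) * ∑' r, f h (r+1))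
        = (1/h) * ∑' r, f h r := by
    filter_upwards [hmem] with h hh
    rw [Summable.tsum_eq_zero_add (hsum hh), hf0 h]
    ring
  -- limit of the two pieces
  have T1 : Filter.Tendsto (fun h : ℝ => (-1:ℝ)^(n+1) * ((1/h) * ∫ y in Set.Icc τ (τ+h), G y))
      (nhdsWithin 0 (Set.Ioi 0)) (nhds ((-1:ℝ)^(n+1) * G τ)) :=
    (tendsto_avg G τ hτ hGc).const_mul _
  have T2 : Filter.Tendsto (fun h : ℝ => (1/h) * ∑' r, f h (r+1))
      (nhdsWithin 0 (Set.Ioi 0)) (nhds 0) := by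
    apply squeeze_zero_norm' (a := fun h : ℝ => h * (4*C^2*D*K))
    · filter_upwards [hmem] with h hh
      rw [norm_mul, norm_div, norm_one, Real.norm_eq_abs h, abs_of_pos hh.1]
      calc 1/h * ‖∑' r, f h (r+1)‖ ≤ 1/h * (h^2 * (4*C^2*D) * K) := by
            apply mul_le_mul_of_nonneg_left (hS hh) (by have := hh.1; positivity)
        _ = h * (4*C^2*D*K) := by
            have h0 : h ≠ 0 := ne_of_gt hh.1
            field_simp
    · have : Filter.Tendsto (fun h : ℝ => h * (4*C^2*D*K)) (nhds 0) (nhds 0) := by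
        have := (continuous_id.mul (continuous_const (y := 4*C^2*D*K))).tendsto 0
        convert this using 2
        · rfl
        exact (zero_mul (4*C^2*D*K)).symm
      exact this.mono_left nhdsWithin_le_nhds
  have Tfinal := T1.add T2
  rw [add_zero] at Tfinal
  have := Tfinal.congr' hsplit
  rwa [hGdef, show (-1:ℝ)^(n+1) * (lam ^ α τ * gbinom (α τ) n)
      = (-1:ℝ)^(n+1) * lam ^ α τ * gbinom (α τ) n from by ring] at this
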